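/- Let K ⊆ ℝⁿ be a compact set and X ⊆ K a finite nonempty set whose vanishing ideal I(X) ⊆ ℝ[x₁,…,x_n] is generated by polynomials f₁,…,f_s each of total degree at most g. If d ≥ 2g, then X satisfies a quadratic isolation condition with respect to the polynomials of degree at most d: there exist constants C_a > 0 and C_b with 0 < C_b < 1 and a polynomial P of total degree at most d such that sup_{z∈K} |P(z)| ≤ 1, P(x) = 1 for every x ∈ X, and P(z) ≤ max(1 − C_a·d(z,X)², 1 − C_b) for every z ∈ K. -/

import Mathlib

noncomputable section

/-- Evaluation of a multivariate polynomial at a point of Euclidean space. -/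
noncomputable def peval {n : ℕ} (f : MvPolynomial (Fin n) ℝ) (z : EuclideanSpace ℝ (Fin n)) : ℝ :=
  MvPolynomial.eval (fun j => z j) f

namespace QICAux

open MvPolynomial
open scoped Classical

lemma continuous_peval {n : ℕ} (p : MvPolynomial (Fin n) ℝ) :
    Continuous fun z : EuclideanSpace ℝ (Fin n) => peval p z := by
  exact (MvPolynomial.continuous_eval p).comp (continuous_pi fun j => by
    exact (EuclideanSpace.proj j).continuous)

lemma exists_bound {n : ℕ} {K : Set (EuclideanSpace ℝ (Fin n))} (hK : IsCompact K)
    (F : EuclideanSpace ℝ (Fin n) → ℝ) (hF : Continuous F) :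
    ∃ M : ℝ, 0 ≤ M ∧ ∀ z ∈ K, F z ≤ M := by
  obtain ⟨C, hC⟩ := hK.exists_bound_of_continuousOn hF.continuousOn
  exact ⟨max C 0, le_max_right _ _, fun z hz =>
    (le_abs_self _).trans ((hC z hz).trans (le_max_left _ _))⟩

noncomputable def qicFactor {n : ℕ} (x y : EuclideanSpace ℝ (Fin n)) : MvPolynomial (Fin n) ℝ :=
  if h : ∃ j, x j ≠ y j then
    MvPolynomial.C (x h.choose - y h.choose)⁻¹ *
      (MvPolynomial.X h.choose - MvPolynomial.C (y h.choose))
  else 1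

lemma exists_sep {n : ℕ} {x y : EuclideanSpace ℝ (Fin n)} (h : x ≠ y) : ∃ j, x j ≠ y j := by
  by_contra hc; push_neg at hc; exact h (PiLp.ext hc)

lemma peval_qicFactor_self {n : ℕ} {x y : EuclideanSpace ℝ (Fin n)} (h : x ≠ y) :
    peval (qicFactor x y) x = 1 := by
  have hex := exists_sep h
  rw [qicFactor, dif_pos hex]
  simp only [peval, map_mul, map_sub, eval_C, eval_X]
  exact inv_mul_cancel₀ (sub_ne_zero.mpr hex.choose_spec)

lemma peval_qicFactor_root {n : ℕ} {x y : EuclideanSpace ℝ (Fin n)} (h : x ≠ y) :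
    peval (qicFactor x y) y = 0 := by
  have hex := exists_sep h
  rw [qicFactor, dif_pos hex]
  simp [peval]

noncomputable def qicE {n : ℕ} (X : Finset (EuclideanSpace ℝ (Fin n)))
    (x : EuclideanSpace ℝ (Fin n)) : MvPolynomial (Fin n) ℝ :=
  ∏ y ∈ X.erase x, qicFactor x y

lemma peval_qicE_self {n : ℕ} (X : Finset (EuclideanSpace ℝ (Fin n)))
    (x : EuclideanSpace ℝ (Fin n)) : peval (qicE X x) x = 1 := by
  rw [qicE, peval, map_prod]
  exact Finset.prod_eq_one fun y hy =>
    peval_qicFactor_self (Finset.ne_of_mem_erase hy).symm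

lemma peval_qicE_ne {n : ℕ} {X : Finset (EuclideanSpace ℝ (Fin n))}
    {x y : EuclideanSpace ℝ (Fin n)} (hy : y ∈ X) (hyx : y ≠ x) :
    peval (qicE X x) y = 0 := by
  rw [qicE, peval, map_prod]
  exact Finset.prod_eq_zero (Finset.mem_erase.mpr ⟨hyx, hy⟩) (peval_qicFactor_root hyx.symm)

lemma dist_sq_eq {n : ℕ} (z x : EuclideanSpace ℝ (Fin n)) :
    dist z x ^ 2 = ∑ j, (z j - x j) ^ 2 := by
  rw [EuclideanSpace.dist_eq, Real.sq_sqrt (by positivity)]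
  simp [Real.dist_eq, sq_abs]

end QICAux

set_option maxHeartbeats 1600000 in
/-- **Quadratic isolation condition**: if `K ⊆ ℝⁿ` is compact, `X ⊆ K` is finite and
nonempty, its vanishing ideal is generated by polynomials `f₁,…,f_s` of degree `≤ g`,
and `d ≥ 2g`, then there are constants `C_a > 0` and `0 < C_b < 1` and a polynomial
`P` of degree `≤ d` with `sup_K |P| ≤ 1`, `P ≡ 1` on `X`, and
`P(z) ≤ max(1 − C_a d(z,X)², 1 − C_b)` for all `z ∈ K`. -/
theorem quadratic_isolation_condition {n : ℕ}
    (K : Set (EuclideanSpace ℝ (Fin n))) (hK : IsCompact K)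
    (X : Finset (EuclideanSpace ℝ (Fin n))) (hXne : X.Nonempty) (hXK : ↑X ⊆ K)
    (g : ℕ) (s : ℕ) (f : Fin s → MvPolynomial (Fin n) ℝ)
    (hfdeg : ∀ i, (f i).totalDegree ≤ g)
    (hfvan : ∀ i, ∀ x ∈ X, peval (f i) x = 0)
    (hfgen : ∀ q : MvPolynomial (Fin n) ℝ, (∀ x ∈ X, peval q x = 0) →
      q ∈ Ideal.span (Set.range f))
    (d : ℕ) (hd : 2 * g ≤ d) :
    ∃ (Ca Cb : ℝ), 0 < Ca ∧ 0 < Cb ∧ Cb < 1 ∧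
      ∃ P : MvPolynomial (Fin n) ℝ, P.totalDegree ≤ d ∧
        (∀ z ∈ K, |peval P z| ≤ 1) ∧
        (∀ x ∈ X, peval P x = 1) ∧
        (∀ z ∈ K, peval P z ≤ max (1 - Ca * Metric.infDist z ↑X ^ 2) (1 - Cb)) := by
  classical
  open MvPolynomial QICAux in
  -- the sum-of-squares polynomial
  set Q : MvPolynomial (Fin n) ℝ := ∑ i, (f i) ^ 2 with hQdef
  have hQval : ∀ z : EuclideanSpace ℝ (Fin n),
      peval Q z = ∑ i, (peval (f i) z) ^ 2 := by
    intro z; simp [peval, hQdef]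
  have hQ0 : ∀ z, 0 ≤ peval Q z := by
    intro z; rw [hQval]; positivity
  have hQdeg : Q.totalDegree ≤ 2 * g := by
    refine MvPolynomial.totalDegree_finsetSum_le fun i _ => ?_
    calc ((f i) ^ 2).totalDegree ≤ 2 * (f i).totalDegree :=
          MvPolynomial.totalDegree_pow _ _
      _ ≤ 2 * g := Nat.mul_le_mul_left 2 (hfdeg i)
  have hQX : ∀ x ∈ X, peval Q x = 0 := by
    intro x hx; rw [hQval]
    exact Finset.sum_eq_zero fun i _ => by rw [hfvan i x hx]; ring
  -- the key Cauchy–Schwarz bound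
  have key : ∀ q : MvPolynomial (Fin n) ℝ, (∀ x ∈ X, peval q x = 0) →
      ∃ M : ℝ, 0 ≤ M ∧ ∀ z ∈ K, (peval q z) ^ 2 ≤ M * peval Q z := by
    intro q hq
    obtain ⟨c, hc⟩ := Ideal.mem_span_range_iff_exists_fun.mp (hfgen q hq)
    obtain ⟨M, hM0, hM⟩ := exists_bound hK (fun z => ∑ i, (peval (c i) z) ^ 2)
      (by exact continuous_finset_sum _ fun i _ => (continuous_peval (c i)).pow 2)
    refine ⟨M, hM0, fun z hz => ?_⟩
    have h1 : peval q z = ∑ i, peval (c i) z * peval (f i) z := by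
      rw [← hc]; simp [peval]
    rw [h1, hQval]
    calc (∑ i, peval (c i) z * peval (f i) z) ^ 2
        ≤ (∑ i, (peval (c i) z) ^ 2) * (∑ i, (peval (f i) z) ^ 2) :=
          Finset.sum_mul_sq_le_sq_mul_sq _ _ _
      _ ≤ M * ∑ i, (peval (f i) z) ^ 2 :=
          mul_le_mul_of_nonneg_right (hM z hz) (by positivity)
  -- bound for the "partition of unity defect"
  obtain ⟨Mr, hMr0, hMr⟩ := key (1 - ∑ x ∈ X, qicE X x) (by
    intro y hy
    have : peval (1 - ∑ x ∈ X, qicE X x) y = 1 - ∑ x ∈ X, peval (qicE X x) y := by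
      simp [peval]
    rw [this, Finset.sum_eq_single_of_mem y hy
      (fun x hx hxy => peval_qicE_ne hy (Ne.symm hxy) ▸ rfl), peval_qicE_self, sub_self])
  -- bound for each point of X
  have hXbnd : ∀ x : EuclideanSpace ℝ (Fin n), ∃ M : ℝ, 0 ≤ M ∧ (x ∈ X →
      ∀ z ∈ K, (peval (qicE X x) z) ^ 2 * dist z x ^ 2 ≤ M * peval Q z) := by
    intro x
    by_cases hx : x ∈ X
    · have hj : ∀ j : Fin n, ∃ M : ℝ, 0 ≤ M ∧ ∀ z ∈ K,
          (peval ((MvPolynomial.X j - MvPolynomial.C (x j)) * qicE X x) z) ^ 2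
            ≤ M * peval Q z := by
        intro j
        refine key _ fun y hy => ?_
        by_cases hyx : y = x
        · subst hyx; simp [peval, map_mul]
        · have h0 := peval_qicE_ne hy hyx
          simp only [peval, map_mul] at h0 ⊢
          rw [h0, mul_zero]
      choose Mj hMj0 hMj using hj
      refine ⟨∑ j, Mj j, Finset.sum_nonneg fun j _ => hMj0 j, fun _ z hz => ?_⟩
      have hsum : ∑ j, (peval ((MvPolynomial.X j - MvPolynomial.C (x j)) * qicE X x) z) ^ 2
          ≤ (∑ j, Mj j) * peval Q z := by
        rw [Finset.sum_mul]
        exact Finset.sum_le_sum fun j _ => hMj j z hz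
      refine le_trans (le_of_eq ?_) hsum
      rw [dist_sq_eq, Finset.mul_sum]
      refine Finset.sum_congr rfl fun j _ => ?_
      simp only [peval, map_mul, map_sub, MvPolynomial.eval_C, MvPolynomial.eval_X]
      ring
    · exact ⟨0, le_rfl, fun h => absurd h hx⟩
  choose MM hMM0 hMM using hXbnd
  set MX : ℝ := ∑ x ∈ X, MM x with hMXdef
  have hMX0 : 0 ≤ MX := Finset.sum_nonneg fun x _ => hMM0 x
  have hMMle : ∀ x ∈ X, MM x ≤ MX := fun x hx =>
    Finset.single_le_sum (fun y _ => hMM0 y) hx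
  set N : ℝ := (X.card : ℝ) with hNdef
  have hN1 : 1 ≤ N := by
    have h1 : 1 ≤ X.card := Finset.card_pos.mpr hXne
    rw [hNdef]
    exact_mod_cast h1
  -- the Łojasiewicz-type inequality
  set δ : ℝ := 1 / (4 * (Mr + 1)) with hδdef
  set c : ℝ := 1 / (4 * N ^ 2 * (MX + 1)) with hcdef
  have hδ0 : 0 < δ := by rw [hδdef]; exact div_pos one_pos (by linarith)
  have hc0 : 0 < c := by rw [hcdef]; exact div_pos one_pos (by nlinarith)
  have claim : ∀ z ∈ K, min δ (c * Metric.infDist z ↑X ^ 2) ≤ peval Q z := by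
    intro z hz
    rcases le_or_gt δ (peval Q z) with h | h
    · exact (min_le_left _ _).trans h
    refine (min_le_right _ _).trans ?_
    -- the defect is small, so some e_x is large
    have hr := hMr z hz
    have hrsmall : (peval (1 - ∑ x ∈ X, qicE X x) z) ^ 2 < 1 / 4 := by
      have : Mr * peval Q z < (Mr + 1) * δ := by
        have h1 : Mr * peval Q z ≤ (Mr + 1) * peval Q z :=
          mul_le_mul_of_nonneg_right (by linarith) (hQ0 z)
        have h2 : (Mr + 1) * peval Q z < (Mr + 1) * δ :=
          mul_lt_mul_of_pos_left h (by linarith)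
        linarith
      have hδval : (Mr + 1) * δ = 1 / 4 := by
        rw [hδdef]; field_simp
      linarith
    set S : ℝ := ∑ x ∈ X, peval (qicE X x) z with hSdef
    have hpv : peval (1 - ∑ x ∈ X, qicE X x) z = 1 - S := by simp [peval, hSdef]
    rw [hpv] at hrsmall
    have hS : 1 / 2 < S := by nlinarith [sq_nonneg (1 - S)]
    obtain ⟨x, hxX, hxlarge⟩ : ∃ x ∈ X, S / N ≤ peval (qicE X x) z := by
      refine Finset.exists_le_of_sum_le hXne ?_
      have : ∑ _x ∈ X, S / N = S := by
        rw [Finset.sum_const, nsmul_eq_mul, hNdef]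
        field_simp
      rw [this, hSdef]
    have hEx : 1 / (2 * N) < peval (qicE X x) z := by
      have hN0 : 0 < N := by linarith
      calc 1 / (2 * N) < S / N := by
            rw [div_lt_div_iff₀ (by linarith) hN0]; nlinarith
        _ ≤ _ := hxlarge
    have hkey := hMM x hxX z hz
    have hinf : Metric.infDist z ↑X ≤ dist z x :=
      Metric.infDist_le_dist_of_mem (by exact_mod_cast hxX)
    have hinf0 : 0 ≤ Metric.infDist z ↑X := Metric.infDist_nonneg
    have hinfsq : Metric.infDist z ↑X ^ 2 ≤ dist z x ^ 2 := pow_le_pow_left₀ hinf0 hinf 2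
    have hE2 : 1 / (4 * N ^ 2) ≤ (peval (qicE X x) z) ^ 2 := by
      have hN0 : 0 < N := by linarith
      have h1 : (1 / (2 * N)) ^ 2 ≤ (peval (qicE X x) z) ^ 2 :=
        pow_le_pow_left₀ (div_nonneg zero_le_one (by linarith)) hEx.le 2
      have h2 : (1 / (2 * N)) ^ 2 = 1 / (4 * N ^ 2) := by field_simp; ring
      linarith
    have hMxMX : MM x * peval Q z ≤ (MX + 1) * peval Q z :=
      mul_le_mul_of_nonneg_right (by linarith [hMMle x hxX]) (hQ0 z)
    have hfinal : Metric.infDist z ↑X ^ 2 * (1 / (4 * N ^ 2)) ≤ (MX + 1) * peval Q z := by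
      calc Metric.infDist z ↑X ^ 2 * (1 / (4 * N ^ 2))
          ≤ dist z x ^ 2 * (peval (qicE X x) z) ^ 2 := by
            exact mul_le_mul hinfsq hE2 (div_nonneg zero_le_one (by nlinarith)) (sq_nonneg _)
        _ = (peval (qicE X x) z) ^ 2 * dist z x ^ 2 := by ring
        _ ≤ MM x * peval Q z := hkey
        _ ≤ (MX + 1) * peval Q z := hMxMX
    have hden : (0:ℝ) < 4 * N ^ 2 * (MX + 1) := by nlinarith
    rw [hcdef]
    rw [div_mul_eq_mul_div, div_le_iff₀ hden]
    calc 1 * Metric.infDist z ↑X ^ 2 = Metric.infDist z ↑X ^ 2 := by ring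
      _ ≤ 4 * N ^ 2 * ((MX + 1) * peval Q z) := by
          have h4N : (0:ℝ) < 4 * N ^ 2 := by nlinarith
          have := mul_le_mul_of_nonneg_left hfinal (le_of_lt h4N)
          calc Metric.infDist z ↑X ^ 2
              = 4 * N ^ 2 * (Metric.infDist z ↑X ^ 2 * (1 / (4 * N ^ 2))) := by
                field_simp
            _ ≤ _ := this
      _ = peval Q z * (4 * N ^ 2 * (MX + 1)) := by ring
  -- the bound on Q over K
  obtain ⟨B, hB0, hB⟩ := exists_bound hK (fun z => peval Q z) (continuous_peval Q)
  set ε : ℝ := 1 / (2 * (B + 1)) with hεdef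
  have hε0 : 0 < ε := by rw [hεdef]; exact div_pos one_pos (by linarith)
  have hεB : ε * B < 1 := by
    rw [hεdef, div_mul_eq_mul_div, div_lt_iff₀ (by linarith)]
    nlinarith
  refine ⟨ε * c, ε * δ, mul_pos hε0 hc0, mul_pos hε0 hδ0, ?_, ?_⟩
  · -- ε * δ < 1
    have hδle : δ ≤ 1 / 4 := by
      rw [hδdef]
      apply div_le_div_of_nonneg_left (by norm_num) (by norm_num) (by linarith)
    have hεle : ε ≤ 1 / 2 := by
      rw [hεdef]
      apply div_le_div_of_nonneg_left (by norm_num) (by norm_num) (by linarith)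
    nlinarith
  refine ⟨1 - MvPolynomial.C ε * Q, ?_, ?_, ?_, ?_⟩
  · -- degree
    refine le_trans (MvPolynomial.totalDegree_sub _ _) (max_le ?_ ?_)
    · simp [MvPolynomial.totalDegree_one]
    · refine le_trans (MvPolynomial.totalDegree_mul _ _) ?_
      rw [MvPolynomial.totalDegree_C]
      omega
  · -- sup bound
    intro z hz
    have h1 : peval (1 - MvPolynomial.C ε * Q) z = 1 - ε * peval Q z := by simp [peval]
    rw [h1, abs_le]
    have h2 : ε * peval Q z ≤ ε * B := mul_le_mul_of_nonneg_left (hB z hz) (le_of_lt hε0)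
    have h3 : 0 ≤ ε * peval Q z := mul_nonneg hε0.le (hQ0 z)
    constructor <;> nlinarith
  · -- equals 1 on X
    intro x hx
    have h1 : peval (1 - MvPolynomial.C ε * Q) x = 1 - ε * peval Q x := by simp [peval]
    rw [h1, hQX x hx, mul_zero, sub_zero]
  · -- the QIC bound
    intro z hz
    have h1 : peval (1 - MvPolynomial.C ε * Q) z = 1 - ε * peval Q z := by simp [peval]
    rw [h1]
    have h2 := claim z hz
    rcases min_cases δ (c * Metric.infDist z ↑X ^ 2) with ⟨heq, hle⟩ | ⟨heq, hle⟩
    · refine le_trans ?_ (le_max_right _ _)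
      rw [heq] at h2
      nlinarith
    · refine le_trans ?_ (le_max_left _ _)
      rw [heq] at h2
      nlinarith [mul_le_mul_of_nonneg_left h2 (le_of_lt hε0)]
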